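/- arXiv:2101.01676 — 3 statements merged into one kernel-verified Lean document; each statement's English description precedes it below -/
import Mathlib

section
/- Let 𝔐 be a class of preference models and ℭ a class of dynamic operators closed over 𝔐 such that every ★ ∈ ℭ satisfies (Faith). Then for every propositional formula φ ∈ L_0, the formula Eφ → (μφ ↔ [★φ]μ⊤) is valid in ⟨𝔐, ℭ⟩, where ⊤ is a fixed propositional tautology. -/
inductive PForm (P : Type) : Type
  | atom : P → PForm P
  | neg  : PForm P → PForm P
  | and  : PForm P → PForm P → PForm P

inductive DForm (P : Type) : Type
  | atom  : P → DForm P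
  | neg   : DForm P → DForm P
  | and   : DForm P → DForm P → DForm P
  | all   : DForm P → DForm P
  | boxLe : DForm P → DForm P
  | boxLt : DForm P → DForm P
  | dyn   : PForm P → DForm P → DForm P

structure PrefModel (P : Type) where
  W : Type
  le : W → W → Prop
  refl : ∀ w, le w w
  trans : ∀ w₁ w₂ w₃, le w₁ w₂ → le w₂ w₃ → le w₁ w₃
  wf : WellFounded (fun w w' => le w w' ∧ ¬ le w' w)
  val : P → Set W

namespace PrefModel
variable {P : Type}
def lt (M : PrefModel P) (w w' : M.W) : Prop := M.le w w' ∧ ¬ M.le w' w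
def Min (M : PrefModel P) (S : Set M.W) : Set M.W :=
  {w | w ∈ S ∧ ¬ ∃ w' ∈ S, M.le w' w ∧ ¬ M.le w w'}
end PrefModel

def psat {P : Type} (M : PrefModel P) : PForm P → M.W → Prop
  | .atom p, w => w ∈ M.val p
  | .neg φ, w => ¬ psat M φ w
  | .and φ ψ, w => psat M φ w ∧ psat M ψ w

def pext {P : Type} (M : PrefModel P) (φ : PForm P) : Set M.W := {w | psat M φ w}

structure DynOp (P : Type) where
  rel : (M : PrefModel P) → PForm P → M.W → M.W → Prop
  refl : ∀ M φ w, rel M φ w w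
  trans : ∀ M φ w₁ w₂ w₃, rel M φ w₁ w₂ → rel M φ w₂ w₃ → rel M φ w₁ w₃
  wf : ∀ M φ, WellFounded (fun w w' => rel M φ w w' ∧ ¬ rel M φ w' w)

def DynOp.apply {P : Type} (s : DynOp P) (M : PrefModel P) (φ : PForm P) : PrefModel P where
  W := M.W
  le := s.rel M φ
  refl := s.refl M φ
  trans := s.trans M φ
  wf := s.wf M φ
  val := M.val

def DynOp.srel {P : Type} (s : DynOp P) (M : PrefModel P) (φ : PForm P) (w w' : M.W) : Prop :=
  s.rel M φ w w' ∧ ¬ s.rel M φ w' w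

def PForm.toD {P : Type} : PForm P → DForm P
  | .atom p => .atom p
  | .neg φ => .neg φ.toD
  | .and φ ψ => .and φ.toD ψ.toD

namespace DForm
variable {P : Type}
def imp (ξ ψ : DForm P) : DForm P := .neg (.and ξ (.neg ψ))
def iff (ξ ψ : DForm P) : DForm P := .and (imp ξ ψ) (imp ψ ξ)
def or (ξ ψ : DForm P) : DForm P := .neg (.and (.neg ξ) (.neg ψ))
def exi (ξ : DForm P) : DForm P := .neg (.all (.neg ξ))
def diaLt (ξ : DForm P) : DForm P := .neg (.boxLt (.neg ξ))
def mu (ξ : DForm P) : DForm P := .and ξ (.neg (diaLt ξ))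
def bel (ψ χ : DForm P) : DForm P := .all (imp (mu χ) ψ)
end DForm

def dsat {P : Type} (s : DynOp P) : DForm P → (M : PrefModel P) → M.W → Prop
  | .atom p, M, w => w ∈ M.val p
  | .neg ξ, M, w => ¬ dsat s ξ M w
  | .and ξ₁ ξ₂, M, w => dsat s ξ₁ M w ∧ dsat s ξ₂ M w
  | .all ξ, M, _ => ∀ w', dsat s ξ M w'
  | .boxLe ξ, M, w => ∀ w', M.le w' w → dsat s ξ M w'
  | .boxLt ξ, M, w => ∀ w', M.lt w' w → dsat s ξ M w'
  | .dyn φ ξ, M, w => dsat s ξ (s.apply M φ) w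

def ClosedOver {P : Type} (s : DynOp P) (𝔐 : Set (PrefModel P)) : Prop :=
  ∀ M ∈ 𝔐, ∀ φ : PForm P, s.apply M φ ∈ 𝔐

/-- `★` satisfies (Faith). -/
def Faith {P : Type} (s : DynOp P) : Prop :=
  ∀ (M : PrefModel P) (φ : PForm P), pext M φ ≠ ∅ →
    M.Min (pext M φ) = (s.apply M φ).Min Set.univ

lemma dsat_toD {P : Type} (s : DynOp P) (ψ : PForm P) (M : PrefModel P) (w : M.W) :
    dsat s ψ.toD M w ↔ psat M ψ w := by
  induction ψ generalizing w with
  | atom p => rfl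
  | neg ψ ih => simp [PForm.toD, dsat, psat, ih]
  | and ψ χ ih1 ih2 => simp [PForm.toD, dsat, psat, ih1, ih2]

theorem faith_validity {P : Type} (𝔐 : Set (PrefModel P)) (ℭ : Set (DynOp P))
    (hclosed : ∀ s ∈ ℭ, ClosedOver s 𝔐) (hfaith : ∀ s ∈ ℭ, Faith s)
    (φ top : PForm P) (htop : ∀ (M : PrefModel P) (w : M.W), psat M top w) :
    ∀ s ∈ ℭ, ∀ M ∈ 𝔐, ∀ w : M.W,
      dsat s ((DForm.exi φ.toD).imp
        ((DForm.mu φ.toD).iff (DForm.dyn φ (DForm.mu top.toD)))) M w := by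
  intro s hs M hM w
  simp only [DForm.imp, DForm.iff, DForm.exi, DForm.mu, DForm.diaLt, dsat, dsat_toD,
    not_and, not_not, not_forall, not_exists]
  intro hE
  obtain ⟨w0, hw0⟩ := hE
  have hne : pext M φ ≠ ∅ := by
    intro h
    have : w0 ∈ pext M φ := hw0
    simp [h] at this
  have hf := hfaith s hs M φ hne
  constructor
  · intro h
    rcases h with ⟨-, hmin⟩
    have hw : w ∈ (s.apply M φ).Min Set.univ := by
      refine ⟨Set.mem_univ _, ?_⟩
      rintro ⟨w', -, hlt⟩
      exact hmin w' hlt (htop _ _)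
    rw [← hf] at hw
    refine ⟨hw.1, ?_⟩
    intro w' hlt hφ'
    exact hw.2 ⟨w', hφ', hlt⟩
  · intro h
    rcases h with ⟨hφ, hmin⟩
    have hw : w ∈ M.Min (pext M φ) := by
      refine ⟨hφ, ?_⟩
      rintro ⟨w', hw', hlt⟩
      exact (hmin w' hlt) hw'
    rw [hf] at hw
    refine ⟨(dsat_toD _ _ _ _).2 (htop _ _), ?_⟩
    intro w' hlt htw
    exact hw.2 ⟨w', Set.mem_univ _, hlt⟩
end

section
/- Let ℭ be a class of dynamic operators each satisfying (DP1), and let 𝔐 be a class of preference models over which every member of ℭ is closed. Then for every φ ∈ L_0 and every ξ ∈ L_≤(★), the following schemata are valid in ⟨𝔐, ℭ⟩: (1) [★φ][≤]ξ → (φ → [≤](φ → [★φ]ξ)); (2) [★φ][<]ξ → (φ → [<](φ → [★φ]ξ)); (3) [≤][★φ]ξ → (φ → [★φ][≤](φ → ξ)); (4) [<][★φ]ξ → (φ → [★φ][<](φ → ξ)). -/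
/-- `★` satisfies (DP1): for all `w, w' ∈ ⟦φ⟧`, `w ≤_{★φ} w'` iff `w ≤ w'`. -/
def SatDP1 {P : Type} (s : DynOp P) : Prop :=
  ∀ (M : PrefModel P) (φ : PForm P) (w w' : M.W),
    psat M φ w → psat M φ w' → (s.rel M φ w w' ↔ M.le w w')

lemma psat_apply {P : Type} (s : DynOp P) (M : PrefModel P) (φ ψ : PForm P)
    (v : (s.apply M φ).W) : psat (s.apply M φ) ψ v ↔ psat M ψ v := by
  induction ψ with
  | atom p => simp [psat, DynOp.apply]; exact Iff.rfl
  | neg ψ ih => simp [psat, ih]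
  | and ψ χ ih1 ih2 => simp [psat, ih1, ih2]

lemma toD_psat {P : Type} (s : DynOp P) (φ : PForm P) (M : PrefModel P) (w : M.W) :
    dsat s φ.toD M w ↔ psat M φ w := by
  induction φ with
  | atom p => simp [PForm.toD, dsat, psat]
  | neg φ ih => simp [PForm.toD, dsat, psat, ih]
  | and φ ψ ih1 ih2 => simp [PForm.toD, dsat, psat, ih1, ih2]

theorem dp1_validities {P : Type} (𝔐 : Set (PrefModel P)) (ℭ : Set (DynOp P))
    (hclosed : ∀ s ∈ ℭ, ClosedOver s 𝔐) (hdp1 : ∀ s ∈ ℭ, SatDP1 s) :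
    ∀ s ∈ ℭ, ∀ M ∈ 𝔐, ∀ (φ : PForm P) (ξ : DForm P), ∀ w : M.W,
      dsat s ((DForm.dyn φ (.boxLe ξ)).imp
        (φ.toD.imp (.boxLe (φ.toD.imp (.dyn φ ξ))))) M w ∧
      dsat s ((DForm.dyn φ (.boxLt ξ)).imp
        (φ.toD.imp (.boxLt (φ.toD.imp (.dyn φ ξ))))) M w ∧
      dsat s ((DForm.boxLe (.dyn φ ξ)).imp
        (φ.toD.imp (.dyn φ (.boxLe (φ.toD.imp ξ))))) M w ∧
      dsat s ((DForm.boxLt (.dyn φ ξ)).imp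
        (φ.toD.imp (.dyn φ (.boxLt (φ.toD.imp ξ))))) M w := by
  intro s hs M hM φ ξ w
  have dp1 := hdp1 s hs M φ
  refine ⟨?_, ?_, ?_, ?_⟩
  · simp only [DForm.imp, dsat, toD_psat, psat_apply, not_and, not_not]
    intro h hφ w' hle hφ'
    exact h w' ((dp1 w' w hφ' hφ).2 hle)
  · simp only [DForm.imp, dsat, toD_psat, psat_apply, not_and, not_not]
    intro h hφ w' hlt hφ'
    refine h w' ⟨(dp1 w' w hφ' hφ).2 hlt.1, fun hr => hlt.2 ((dp1 w w' hφ hφ').1 hr)⟩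
  · simp only [DForm.imp, dsat, toD_psat, psat_apply, not_and, not_not]
    intro h hφ w' hle hφ'
    exact h w' ((dp1 w' w hφ' hφ).1 hle)
  · simp only [DForm.imp, dsat, toD_psat, psat_apply, not_and, not_not]
    intro h hφ w' hlt hφ'
    refine h w' ⟨(dp1 w' w hφ' hφ).1 hlt.1, fun hr => hlt.2 ((dp1 w w' hφ hφ').2 hr)⟩
end

section
/- Assume P is nonempty. There exist dynamic operators ★ and ∗ such that: ∗ satisfies (DP1); ★ does not satisfy (DP1); and for every class 𝔐 of preference models over which both ★ and ∗ are closed and every formula ξ ∈ L_≤(★), ξ is satisfiable in ⟨𝔐, ★⟩ (i.e., D,w ⊨ ξ for some dynamic model D ∈ ⟨𝔐, ★⟩ and some world w) if and only if ξ is satisfiable in ⟨𝔐, ∗⟩. -/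
namespace DP1Aux
variable {P : Type}

/-- The identity dynamic operator. -/
def astOp (P : Type) : DynOp P where
  rel M _ := M.le
  refl M _ := M.refl
  trans M _ := M.trans
  wf M _ := M.wf

/-- A model is "uniform discrete": `le` is discrete and all worlds share the valuation. -/
def Cnd (M : PrefModel P) : Prop :=
  (∀ w w', M.le w w' → w = w') ∧ ∀ (p : P) (w w' : M.W), w ∈ M.val p ↔ w' ∈ M.val p

/-- The operator that totalizes the relation exactly on uniform discrete models. -/
def starOp (P : Type) : DynOp P where
  rel M _ w w' := Cnd M ∨ M.le w w'
  refl M _ w := Or.inr (M.refl w)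
  trans M _ w₁ w₂ w₃ h₁ h₂ := by
    rcases h₁ with h | h
    · exact Or.inl h
    rcases h₂ with h' | h'
    · exact Or.inl h'
    · exact Or.inr (M.trans _ _ _ h h')
  wf M _ := by
    refine Subrelation.wf (r := fun w w' => M.le w w' ∧ ¬ M.le w' w) (fun {w w'} h => ?_) M.wf
    exact ⟨h.1.resolve_left (fun hc => h.2 (Or.inl hc)), fun hle => h.2 (Or.inr hle)⟩

lemma mk_eq {W : Type} {le le' : W → W → Prop} (h : le = le')
    {v : P → Set W} (r t wfp r' t' wfp') :
    PrefModel.mk W le r t wfp v = PrefModel.mk W le' r' t' wfp' v := by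
  subst h; rfl

lemma astApply (M : PrefModel P) (φ : PForm P) : (astOp P).apply M φ = M := rfl

lemma starApply_of_not {M : PrefModel P} (φ : PForm P) (h : ¬ Cnd M) :
    (starOp P).apply M φ = M := by
  cases M with
  | mk W le r t wfp v =>
    exact mk_eq (by
      funext w w'
      exact propext ⟨fun hh => hh.resolve_left h, Or.inr⟩) _ _ _ _ _ _

lemma dsat_model_eq {s : DynOp P} (ξ : DForm P) {M N : PrefModel P} (h : M = N) :
    HEq (dsat s ξ M) (dsat s ξ N) := by subst h; rfl

/-- On uniform discrete models, the totalized model is pointwise modally equivalent. -/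
lemma equivLemma {M : PrefModel P} (φ : PForm P) (hC : Cnd M) :
    ∀ ξ : DForm P, ∀ w w' : M.W,
      (dsat (astOp P) ξ M w ↔ dsat (astOp P) ξ ((starOp P).apply M φ) w') := by
  intro ξ
  induction ξ with
  | atom p => intro w w'; exact hC.2 p w w'
  | neg ξ ih => intro w w'; exact not_congr (ih w w')
  | and ξ₁ ξ₂ ih₁ ih₂ =>
      intro w w'
      exact and_congr (ih₁ w w') (ih₂ w w')
  | all ξ ih =>
      intro w w'
      constructor
      · intro h u; exact (ih u u).mp (h u)
      · intro h u; exact (ih u u).mpr (h u)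
  | boxLe ξ ih =>
      intro w w'
      constructor
      · intro h u _; exact (ih w u).mp (h w (M.refl w))
      · intro h u _; exact (ih u u).mpr (h u (Or.inl hC))
  | boxLt ξ ih =>
      intro w w'
      constructor
      · intro _ u hu; exact absurd (Or.inl hC) hu.2
      · intro _ u hu
        have he : u = w := hC.1 _ _ hu.1
        exact absurd (he ▸ M.refl u) hu.2
  | dyn φ' ξ ih =>
      intro w w'
      show dsat (astOp P) ξ M w ↔ dsat (astOp P) ξ ((starOp P).apply M φ) w'
      exact ih w w'

lemma main (ξ : DForm P) : ∀ (M : PrefModel P) (w : M.W),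
    dsat (starOp P) ξ M w ↔ dsat (astOp P) ξ M w := by
  induction ξ with
  | atom p => intro M w; exact Iff.rfl
  | neg ξ ih => intro M w; exact not_congr (ih M w)
  | and ξ₁ ξ₂ ih₁ ih₂ => intro M w; exact and_congr (ih₁ M w) (ih₂ M w)
  | all ξ ih =>
      intro M w
      exact forall_congr' (fun u => ih M u)
  | boxLe ξ ih =>
      intro M w
      exact forall_congr' (fun u => imp_congr Iff.rfl (ih M u))
  | boxLt ξ ih =>
      intro M w
      exact forall_congr' (fun u => imp_congr Iff.rfl (ih M u))
  | dyn φ ξ ih =>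
      intro M w
      show dsat (starOp P) ξ ((starOp P).apply M φ) w ↔ dsat (astOp P) ξ M w
      by_cases hC : Cnd M
      · exact (ih ((starOp P).apply M φ) w).trans (equivLemma φ hC ξ w w).symm
      · have h2 : dsat (starOp P) ξ ((starOp P).apply M φ) = dsat (starOp P) ξ M :=
          eq_of_heq (dsat_model_eq ξ (starApply_of_not φ hC))
        rw [h2]; exact ih M w

/-- A two-world uniform discrete model witnessing failure of DP1 for `starOp`. -/
def M0 (P : Type) : PrefModel P where
  W := Bool
  le := Eq
  refl _ := rfl
  trans _ _ _ h h' := h.trans h'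
  wf := by
    constructor
    intro x
    constructor
    intro y hy
    exact absurd hy.1.symm hy.2
  val _ := Set.univ

lemma cnd_M0 : Cnd (M0 P) := ⟨fun _ _ h => h, fun _ _ _ => Iff.rfl⟩

lemma not_dp1_star (hP : Nonempty P) : ¬ SatDP1 (starOp P) := by
  intro h
  obtain ⟨p⟩ := hP
  have := (h (M0 P) (.atom p) true false (Set.mem_univ _) (Set.mem_univ _)).mp
    (Or.inl cnd_M0)
  exact Bool.noConfusion this

end DP1Aux

theorem dp1_not_characterisable {P : Type} (hP : Nonempty P) :
    ∃ star ast : DynOp P, SatDP1 ast ∧ ¬ SatDP1 star ∧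
      ∀ 𝔐 : Set (PrefModel P), ClosedOver star 𝔐 → ClosedOver ast 𝔐 →
        ∀ ξ : DForm P,
          ((∃ M ∈ 𝔐, ∃ w : M.W, dsat star ξ M w) ↔
            (∃ M ∈ 𝔐, ∃ w : M.W, dsat ast ξ M w)) := by
  refine ⟨DP1Aux.starOp P, DP1Aux.astOp P, fun M φ w w' _ _ => Iff.rfl,
    DP1Aux.not_dp1_star hP, ?_⟩
  intro 𝔐 _ _ ξ
  constructor
  · rintro ⟨M, hM, w, hw⟩; exact ⟨M, hM, w, (DP1Aux.main ξ M w).mp hw⟩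
  · rintro ⟨M, hM, w, hw⟩; exact ⟨M, hM, w, (DP1Aux.main ξ M w).mpr hw⟩
end
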